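/- arXiv:cs/0207042 — 4 statements merged into one kernel-verified Lean document; each statement's English description precedes it below -/
import Mathlib

section
/- The preference relation > on answer sets of an LPOD P (S₁ > S₂ iff there exists i such that S₂ⁱ(P) ⊊ S₁ⁱ(P) and S₁ʲ(P) = S₂ʲ(P) for all j < i) is transitive. -/
namespace LPOD

/-- An LPOD rule `C₁ × … × Cₙ ← A₁,…,Aₘ, not B₁,…, not Bₖ`:
`head` is the ordered list of choices, `pos` the positive body literals,
`neg` the default-negated body literals. -/
structure Rule (L : Type) where
  head : List L
  pos  : List L
  neg  : List L

/-- `S` satisfies the body of `r`. -/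
def bodySat {L : Type} (S : Set L) (r : Rule L) : Prop :=
  (∀ a ∈ r.pos, a ∈ S) ∧ (∀ b ∈ r.neg, b ∉ S)

/-- `S` satisfies rule `r` to degree `d` (1-based): degree 1 if the body fails,
otherwise the minimal index of a head choice belonging to `S`. -/
def satDeg {L : Type} (S : Set L) (r : Rule L) (d : ℕ) : Prop :=
  (¬ bodySat S r ∧ d = 1) ∨
  (bodySat S r ∧ 1 ≤ d ∧
    (∃ c, r.head[d - 1]? = some c ∧ c ∈ S) ∧
    (∀ i < d - 1, ∀ c, r.head[i]? = some c → c ∉ S))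

/-- The `k`-th option (1-based) of rule `r`:
`Cₖ ← body, not C₁, …, not C_{k−1}`. -/
def ruleOption {L : Type} (r : Rule L) (k : ℕ) : Rule L :=
  { head := (r.head[k - 1]?).toList
    pos  := r.pos
    neg  := r.neg ++ r.head.take (k - 1) }

/-- `P'` is a split program of `P`: each rule of `P` is replaced by one of its options. -/
def isSplit {L : Type} (P P' : List (Rule L)) : Prop :=
  P'.length = P.length ∧
  ∀ i r, P[(i : ℕ)]? = some r →
    ∃ k, 1 ≤ k ∧ k ≤ r.head.length ∧ P'[i]? = some (ruleOption r k)

/-- `T` is closed under the `S`-reduct of `P` (Gelfond–Lifschitz). -/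
def reductClosed {L : Type} (P : List (Rule L)) (S T : Set L) : Prop :=
  ∀ r ∈ P, (∀ b ∈ r.neg, b ∉ S) → (∀ a ∈ r.pos, a ∈ T) → ∃ c ∈ r.head, c ∈ T

/-- Literals are `(true, a)` (the atom `a`) and `(false, a)` (its strong negation `¬a`). -/
def consistent {A : Type} (S : Set (Bool × A)) : Prop :=
  ¬ ∃ a, (true, a) ∈ S ∧ (false, a) ∈ S

/-- Logically closed: consistent, or the set of all literals. -/
def logClosed {A : Type} (S : Set (Bool × A)) : Prop :=
  consistent S ∨ S = Set.univ

/-- `S` is an answer set of the ordered-disjunction-free program `P`: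
a minimal logically closed set closed under the `S`-reduct of `P`. -/
def answerSet {A : Type} (P : List (Rule (Bool × A))) (S : Set (Bool × A)) : Prop :=
  logClosed S ∧ reductClosed P S S ∧
  ∀ T, T ⊆ S → logClosed T → reductClosed P S T → T = S

/-- `S` is an answer set of the LPOD `P`: a consistent answer set of some split program. -/
def lpodAS {A : Type} (P : List (Rule (Bool × A))) (S : Set (Bool × A)) : Prop :=
  ∃ P', isSplit P P' ∧ answerSet P' S ∧ consistent S

/-- `Sⁱ(P)`: the rules of `P` satisfied by `S` to degree `i`. -/
def degSet {L : Type} (S : Set L) (P : List (Rule L)) (i : ℕ) : Set (Rule L) :=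
  {r | r ∈ P ∧ satDeg S r i}

/-- `S₁ > S₂`: for some degree `i`, `S₂ⁱ(P) ⊊ S₁ⁱ(P)` and `S₁ʲ(P) = S₂ʲ(P)` for all `j < i`. -/
def pref {L : Type} (P : List (Rule L)) (S₁ S₂ : Set L) : Prop :=
  ∃ i, 1 ≤ i ∧ degSet S₂ P i ⊂ degSet S₁ P i ∧
    ∀ j < i, degSet S₁ P j = degSet S₂ P j

/-- Preferred answer sets: answer sets not beaten by any answer set. -/
def preferredAS {A : Type} (P : List (Rule (Bool × A))) (S : Set (Bool × A)) : Prop :=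
  lpodAS P S ∧ ¬ ∃ S', lpodAS P S' ∧ pref P S' S

end LPOD

open LPOD

/-- the preference relation on answer sets of an LPOD is transitive
(under the assumption that each answer set satisfies every rule to exactly one degree). -/
theorem pref_trans {A : Type} (P : List (Rule (Bool × A)))
    (S₁ S₂ S₃ : Set (Bool × A))
    (h₁ : lpodAS P S₁) (h₂ : lpodAS P S₂) (h₃ : lpodAS P S₃)
    (hpart : ∀ S : Set (Bool × A), (S = S₁ ∨ S = S₂ ∨ S = S₃) →
      ∀ r ∈ P, ∃! d : ℕ, satDeg S r d)
    (h12 : pref P S₁ S₂) (h23 : pref P S₂ S₃) : pref P S₁ S₃ := by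
  obtain ⟨i, hi1, hi2, hi3⟩ := h12
  obtain ⟨k, hk1, hk2, hk3⟩ := h23
  rcases lt_trichotomy i k with h | h | h
  · exact ⟨i, hi1, (hk3 i h) ▸ hi2, fun j hj => (hi3 j hj).trans (hk3 j (hj.trans h))⟩
  · subst h
    exact ⟨i, hi1, hk2.trans hi2, fun j hj => (hi3 j hj).trans (hk3 j hj)⟩
  · exact ⟨k, hk1, (hi3 k h) ▸ hk2, fun j hj => (hi3 j (hj.trans h)).trans (hk3 j hj)⟩
end

section
/- There exists an LPOD P whose preferred answer sets are not subset-minimal: concretely, the program with rules a × b; c × b ← a; ¬c has exactly the preferred answer sets S₁ = {b, ¬c} and S₂ = {a, b, ¬c}, and S₁ ⊊ S₂. -/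
open LPOD

namespace Stmt5

/-- atoms: a = 0, b = 1, c = 2 -/
def a : Bool × Fin 3 := (true, 0)
def b : Bool × Fin 3 := (true, 1)
def c : Bool × Fin 3 := (true, 2)
def nc : Bool × Fin 3 := (false, 2)

/-- the program  a × b ;  c × b ← a ;  ¬c -/
def P : List (Rule (Bool × Fin 3)) :=
  [⟨[a, b], [], []⟩, ⟨[c, b], [a], []⟩, ⟨[nc], [], []⟩]

/-! ### auxiliary definitions and lemmas -/

def S1 : Set (Bool × Fin 3) := {b, nc}
def S2 : Set (Bool × Fin 3) := {a, b, nc}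

def r1 : Rule (Bool × Fin 3) := ⟨[a, b], [], []⟩
def r2 : Rule (Bool × Fin 3) := ⟨[c, b], [a], []⟩
def r3 : Rule (Bool × Fin 3) := ⟨[nc], [], []⟩

def o11 : Rule (Bool × Fin 3) := ⟨[a], [], []⟩
def o12 : Rule (Bool × Fin 3) := ⟨[b], [], [a]⟩
def o21 : Rule (Bool × Fin 3) := ⟨[c], [a], []⟩
def o22 : Rule (Bool × Fin 3) := ⟨[b], [a], [c]⟩
def o3  : Rule (Bool × Fin 3) := ⟨[nc], [], []⟩

example : ruleOption r1 1 = o11 := rfl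
example : ruleOption r1 2 = o12 := rfl
example : ruleOption r2 1 = o21 := rfl
example : ruleOption r2 2 = o22 := rfl
example : ruleOption r3 1 = o3 := rfl

lemma mem_S1 (x : Bool × Fin 3) : x ∈ S1 ↔ x = b ∨ x = nc := by simp [S1]
lemma mem_S2 (x : Bool × Fin 3) : x ∈ S2 ↔ x = a ∨ x = b ∨ x = nc := by simp [S2]

lemma a_nmem_S1 : a ∉ S1 := by rw [mem_S1]; decide
lemma b_mem_S1 : b ∈ S1 := by rw [mem_S1]; decide
lemma nc_mem_S1 : nc ∈ S1 := by rw [mem_S1]; decide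
lemma c_nmem_S1 : c ∉ S1 := by rw [mem_S1]; decide
lemma a_mem_S2 : a ∈ S2 := by rw [mem_S2]; decide
lemma b_mem_S2 : b ∈ S2 := by rw [mem_S2]; decide
lemma nc_mem_S2 : nc ∈ S2 := by rw [mem_S2]; decide
lemma c_nmem_S2 : c ∉ S2 := by rw [mem_S2]; decide

lemma cons_S1 : consistent S1 := by
  rintro ⟨x, h1, h2⟩; fin_cases x <;> simp [S1, b, nc, Set.mem_insert_iff] at h1 h2
lemma cons_S2 : consistent S2 := by
  rintro ⟨x, h1, h2⟩; fin_cases x <;> simp [S2, a, b, nc, Set.mem_insert_iff] at h1 h2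
lemma P_eq : P = [r1, r2, r3] := rfl

/-! ### answer sets of the four split programs -/

lemma split11 (S : Set (Bool × Fin 3)) (hc : consistent S)
    (hred : reductClosed [o11, o21, o3] S S) : False := by
  have ha : a ∈ S := by
    simpa [o11] using hred o11 (by simp) (by simp [o11]) (by simp [o11])
  have hnc : nc ∈ S := by
    simpa [o3] using hred o3 (by simp) (by simp [o3]) (by simp [o3])
  have hcS : c ∈ S := by
    simpa [o21] using hred o21 (by simp) (by simp [o21]) (by simp [o21, ha])
  exact hc ⟨2, hcS, hnc⟩

lemma split12 (S : Set (Bool × Fin 3)) (hc : consistent S)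
    (hAS : answerSet [o11, o22, o3] S) : S = S2 := by
  obtain ⟨-, hred, hmin⟩ := hAS
  have ha : a ∈ S := by
    simpa [o11] using hred o11 (by simp) (by simp [o11]) (by simp [o11])
  have hnc : nc ∈ S := by
    simpa [o3] using hred o3 (by simp) (by simp [o3]) (by simp [o3])
  have hcn : c ∉ S := fun h => hc ⟨2, h, hnc⟩
  have hsub : S2 ⊆ S := by
    intro x hx; rw [mem_S2] at hx
    have hb : b ∈ S := by
      simpa [o22] using hred o22 (by simp) (by simp [o22, hcn]) (by simp [o22, ha])
    rcases hx with rfl | rfl | rfl <;> assumption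
  have hredT : reductClosed [o11, o22, o3] S S2 := by
    intro r hr
    simp only [List.mem_cons, List.not_mem_nil, or_false] at hr
    rcases hr with rfl | rfl | rfl <;> intro _ _
    · exact ⟨a, by simp [o11], a_mem_S2⟩
    · exact ⟨b, by simp [o22], b_mem_S2⟩
    · exact ⟨nc, by simp [o3], nc_mem_S2⟩
  exact (hmin S2 hsub (Or.inl cons_S2) hredT).symm

lemma split21 (S : Set (Bool × Fin 3)) (hc : consistent S)
    (hAS : answerSet [o12, o21, o3] S) : S = S1 := by
  obtain ⟨-, hred, hmin⟩ := hAS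
  have hnc : nc ∈ S := by
    simpa [o3] using hred o3 (by simp) (by simp [o3]) (by simp [o3])
  have han : a ∉ S := by
    intro ha
    have hcS : c ∈ S := by
      simpa [o21] using hred o21 (by simp) (by simp [o21]) (by simp [o21, ha])
    exact hc ⟨2, hcS, hnc⟩
  have hb : b ∈ S := by
    simpa [o12] using hred o12 (by simp) (by simp [o12, han]) (by simp [o12])
  have hsub : S1 ⊆ S := by
    intro x hx; rw [mem_S1] at hx
    rcases hx with rfl | rfl <;> assumption
  have hredT : reductClosed [o12, o21, o3] S S1 := by
    intro r hr
    simp only [List.mem_cons, List.not_mem_nil, or_false] at hr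
    rcases hr with rfl | rfl | rfl
    · intro _ _; exact ⟨b, by simp [o12], b_mem_S1⟩
    · intro _ hpos; exact absurd (hpos a (by simp [o21])) a_nmem_S1
    · intro _ _; exact ⟨nc, by simp [o3], nc_mem_S1⟩
  exact (hmin S1 hsub (Or.inl cons_S1) hredT).symm

lemma split22 (S : Set (Bool × Fin 3)) (hc : consistent S)
    (hAS : answerSet [o12, o22, o3] S) : S = S1 := by
  obtain ⟨-, hred, hmin⟩ := hAS
  have hnc : nc ∈ S := by
    simpa [o3] using hred o3 (by simp) (by simp [o3]) (by simp [o3])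
  have hb : b ∈ S := by
    by_cases ha : a ∈ S
    · have hcn : c ∉ S := fun h => hc ⟨2, h, hnc⟩
      simpa [o22] using hred o22 (by simp) (by simp [o22, hcn]) (by simp [o22, ha])
    · simpa [o12] using hred o12 (by simp) (by simp [o12, ha]) (by simp [o12])
  have hsub : S1 ⊆ S := by
    intro x hx; rw [mem_S1] at hx
    rcases hx with rfl | rfl <;> assumption
  have hredT : reductClosed [o12, o22, o3] S S1 := by
    intro r hr
    simp only [List.mem_cons, List.not_mem_nil, or_false] at hr
    rcases hr with rfl | rfl | rfl
    · intro _ _; exact ⟨b, by simp [o12], b_mem_S1⟩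
    · intro _ hpos; exact absurd (hpos a (by simp [o22])) a_nmem_S1
    · intro _ _; exact ⟨nc, by simp [o3], nc_mem_S1⟩
  exact (hmin S1 hsub (Or.inl cons_S1) hredT).symm

lemma asP21 : answerSet [o12, o21, o3] S1 := by
  refine ⟨Or.inl cons_S1, ?_, ?_⟩
  · intro r hr
    simp only [List.mem_cons, List.not_mem_nil, or_false] at hr
    rcases hr with rfl | rfl | rfl
    · intro _ _; exact ⟨b, by simp [o12], b_mem_S1⟩
    · intro _ hpos; exact absurd (hpos a (by simp [o21])) a_nmem_S1
    · intro _ _; exact ⟨nc, by simp [o3], nc_mem_S1⟩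
  · intro T hT _ hred
    refine Set.Subset.antisymm hT ?_
    have hb : b ∈ T := by
      simpa [o12] using hred o12 (by simp) (by simp [o12, a_nmem_S1]) (by simp [o12])
    have hnc : nc ∈ T := by
      simpa [o3] using hred o3 (by simp) (by simp [o3]) (by simp [o3])
    intro x hx; rw [mem_S1] at hx
    rcases hx with rfl | rfl <;> assumption

lemma asP12 : answerSet [o11, o22, o3] S2 := by
  refine ⟨Or.inl cons_S2, ?_, ?_⟩
  · intro r hr
    simp only [List.mem_cons, List.not_mem_nil, or_false] at hr
    rcases hr with rfl | rfl | rfl <;> intro _ _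
    · exact ⟨a, by simp [o11], a_mem_S2⟩
    · exact ⟨b, by simp [o22], b_mem_S2⟩
    · exact ⟨nc, by simp [o3], nc_mem_S2⟩
  · intro T hT _ hred
    refine Set.Subset.antisymm hT ?_
    have ha : a ∈ T := by
      simpa [o11] using hred o11 (by simp) (by simp [o11]) (by simp [o11])
    have hb : b ∈ T := by
      simpa [o22] using hred o22 (by simp) (by simp [o22, c_nmem_S2]) (by simp [o22, ha])
    have hnc : nc ∈ T := by
      simpa [o3] using hred o3 (by simp) (by simp [o3]) (by simp [o3])
    intro x hx; rw [mem_S2] at hx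
    rcases hx with rfl | rfl | rfl <;> assumption

lemma splitP21 : isSplit P [o12, o21, o3] := by
  refine ⟨rfl, ?_⟩
  intro i r h
  match i with
  | 0 => rw [P_eq] at h; simp at h; subst h; exact ⟨2, by decide, by decide, rfl⟩
  | 1 => rw [P_eq] at h; simp at h; subst h; exact ⟨1, by decide, by decide, rfl⟩
  | 2 => rw [P_eq] at h; simp at h; subst h; exact ⟨1, by decide, by decide, rfl⟩
  | (n+3) => rw [P_eq] at h; simp at h

lemma splitP12 : isSplit P [o11, o22, o3] := by
  refine ⟨rfl, ?_⟩
  intro i r h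
  match i with
  | 0 => rw [P_eq] at h; simp at h; subst h; exact ⟨1, by decide, by decide, rfl⟩
  | 1 => rw [P_eq] at h; simp at h; subst h; exact ⟨2, by decide, by decide, rfl⟩
  | 2 => rw [P_eq] at h; simp at h; subst h; exact ⟨1, by decide, by decide, rfl⟩
  | (n+3) => rw [P_eq] at h; simp at h
lemma lpod_iff (S : Set (Bool × Fin 3)) : lpodAS P S ↔ S = S1 ∨ S = S2 := by
  constructor
  · rintro ⟨P', ⟨hlen, hopt⟩, hAS, hc⟩
    rw [P_eq] at hlen
    obtain ⟨x, y, z, rfl⟩ : ∃ x y z, P' = [x, y, z] := by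
      rcases P' with _ | ⟨x, _ | ⟨y, _ | ⟨z, _ | _⟩⟩⟩ <;>
        first | exact ⟨_, _, _, rfl⟩ | simp_all
    obtain ⟨k1, hk1a, hk1b, hg1⟩ := hopt 0 r1 rfl
    obtain ⟨k2, hk2a, hk2b, hg2⟩ := hopt 1 r2 rfl
    obtain ⟨k3, hk3a, hk3b, hg3⟩ := hopt 2 r3 rfl
    simp only [List.getElem?_cons_zero, List.getElem?_cons_succ] at hg1 hg2 hg3
    injection hg1 with hg1; injection hg2 with hg2; injection hg3 with hg3
    subst hg1; subst hg2; subst hg3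
    have hl1 : r1.head.length = 2 := rfl
    have hl2 : r2.head.length = 2 := rfl
    have hl3 : r3.head.length = 1 := rfl
    rw [hl1] at hk1b; rw [hl2] at hk2b; rw [hl3] at hk3b
    have e3 : ruleOption r3 k3 = o3 := by
      interval_cases k3; rfl
    rw [e3] at hAS
    interval_cases k1 <;> interval_cases k2
    · exact absurd (split11 S hc (by exact hAS.2.1)) id
    · right
      exact split12 S hc (by exact hAS)
    · left
      exact split21 S hc (by exact hAS)
    · left
      exact split22 S hc (by exact hAS)
  · rintro (rfl | rfl)
    · exact ⟨[o12, o21, o3], splitP21, asP21, cons_S1⟩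
    · exact ⟨[o11, o22, o3], splitP12, asP12, cons_S2⟩

/-! ### degrees and preferences -/

lemma r2_deg1_S1 : r2 ∈ degSet S1 P 1 := by
  refine ⟨by rw [P_eq]; simp, Or.inl ⟨?_, rfl⟩⟩
  rintro ⟨h, -⟩
  exact a_nmem_S1 (h a (by simp [r2]))

lemma r2_not_deg1_S2 : r2 ∉ degSet S2 P 1 := by
  rintro ⟨-, (⟨hnb, -⟩ | ⟨-, -, ⟨x, hx, hxS⟩, -⟩)⟩
  · exact hnb ⟨by simp [r2, a_mem_S2], by simp [r2]⟩
  · simp [r2] at hx; subst hx; exact c_nmem_S2 hxS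

lemma r1_deg1_S2 : r1 ∈ degSet S2 P 1 := by
  refine ⟨by rw [P_eq]; simp, Or.inr ⟨⟨by simp [r1], by simp [r1]⟩, le_refl 1, ⟨a, rfl, a_mem_S2⟩, ?_⟩⟩
  intro i hi; omega

lemma r1_not_deg1_S1 : r1 ∉ degSet S1 P 1 := by
  rintro ⟨-, (⟨hnb, -⟩ | ⟨-, -, ⟨x, hx, hxS⟩, -⟩)⟩
  · exact hnb ⟨by simp [r1], by simp [r1]⟩
  · simp [r1] at hx; subst hx; exact a_nmem_S1 hxS

lemma not_pref_self (S : Set (Bool × Fin 3)) : ¬ pref P S S := by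
  rintro ⟨i, -, h, -⟩
  exact h.2 h.1

lemma not_pref_21 : ¬ pref P S2 S1 := by
  rintro ⟨i, hi, hsub, heq⟩
  rcases eq_or_lt_of_le hi with rfl | hi'
  · exact r2_not_deg1_S2 (hsub.1 r2_deg1_S1)
  · exact r2_not_deg1_S2 ((heq 1 hi') ▸ r2_deg1_S1)

lemma not_pref_12 : ¬ pref P S1 S2 := by
  rintro ⟨i, hi, hsub, heq⟩
  rcases eq_or_lt_of_le hi with rfl | hi'
  · exact r1_not_deg1_S1 (hsub.1 r1_deg1_S2)
  · exact r1_not_deg1_S1 ((heq 1 hi') ▸ r1_deg1_S2)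

/-- preferred answer sets of an LPOD need not be subset-minimal:
this program has exactly the preferred answer sets {b,¬c} and {a,b,¬c}, and the
first is a proper subset of the second. -/
theorem preferred_not_minimal :
    (∀ S : Set (Bool × Fin 3),
      preferredAS P S ↔ (S = {b, nc} ∨ S = {a, b, nc})) ∧
    ({b, nc} : Set (Bool × Fin 3)) ⊂ {a, b, nc} := by
  constructor
  · intro S
    constructor
    · rintro ⟨hAS, -⟩
      exact (lpod_iff S).mp hAS
    · rintro (rfl | rfl)
      · refine ⟨(lpod_iff S1).mpr (Or.inl rfl), ?_⟩
        rintro ⟨S', hS', hp⟩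
        rcases (lpod_iff S').mp hS' with rfl | rfl
        · exact not_pref_self S1 hp
        · exact not_pref_21 hp
      · refine ⟨(lpod_iff S2).mpr (Or.inr rfl), ?_⟩
        rintro ⟨S', hS', hp⟩
        rcases (lpod_iff S').mp hS' with rfl | rfl
        · exact not_pref_12 hp
        · exact not_pref_self S2 hp
  · constructor
    · intro x hx
      rcases (mem_S1 x).mp hx with rfl | rfl
      · exact b_mem_S2
      · exact nc_mem_S2
    · intro h
      exact a_nmem_S1 (h a_mem_S2)

end Stmt5
end

section
/- Answer sets of extended logic programs (without disjunction) under the Gelfond–Lifschitz semantics are subset-minimal: if S₁ and S₂ are both answer sets of the same extended logic program P and S₁ ⊆ S₂, then S₁ = S₂. -/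
open LPOD

/-- answer sets of extended logic programs (every rule has a single
head literal) are subset-minimal. -/
theorem answer_sets_minimal {A : Type} (P : List (Rule (Bool × A)))
    (hsingle : ∀ r ∈ P, r.head.length = 1)
    (S₁ S₂ : Set (Bool × A)) (h₁ : answerSet P S₁) (h₂ : answerSet P S₂)
    (hsub : S₁ ⊆ S₂) : S₁ = S₂ := by
  exact h₂.2.2 S₁ hsub h₁.1 (fun r hr hneg hpos =>
    h₁.2.1 r hr (fun b hb hbS => hneg b hb (hsub hbS)) hpos)
end

section
/- There is no translation function trans from LPODs to extended logic programs over the same literal vocabulary (without introducing new atoms) such that for every LPOD P, the preferred answer sets of P coincide exactly with the answer sets of trans(P). -/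
open LPOD

namespace NTaux

variable {A : Type}

def R1 (x y : A) : Rule (Bool × A) := ⟨[(true,x),(true,y)],[],[]⟩
def R2 (x y z : A) : Rule (Bool × A) := ⟨[(true,z),(true,y)],[(true,x)],[]⟩
def R3 (z : A) : Rule (Bool × A) := ⟨[(false,z)],[],[]⟩
def Pex (x y z : A) : List (Rule (Bool × A)) := [R1 x y, R2 x y z, R3 z]

def S1 (y z : A) : Set (Bool × A) := {(true,y),(false,z)}
def S2 (x y z : A) : Set (Bool × A) := {(true,x),(true,y),(false,z)}

example (x y : A) : ruleOption (R1 x y) 1 = ⟨[(true,x)],[],[]⟩ := rfl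
example (x y : A) : ruleOption (R1 x y) 2 = ⟨[(true,y)],[],[(true,x)]⟩ := rfl
example (x y z : A) : ruleOption (R2 x y z) 1 = ⟨[(true,z)],[(true,x)],[]⟩ := rfl
example (x y z : A) : ruleOption (R2 x y z) 2 = ⟨[(true,y)],[(true,x)],[(true,z)]⟩ := rfl
example (z : A) : ruleOption (R3 z) 1 = ⟨[(false,z)],[],[]⟩ := rfl

theorem as_min {Q : List (Rule (Bool×A))} {T S : Set (Bool×A)}
    (hT : answerSet Q T) (hS : answerSet Q S) (hsub : T ⊆ S) : T = S := by
  refine hS.2.2 T hsub hT.1 ?_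
  intro r hr hneg hpos
  exact hT.2.1 r hr (fun b hb hbT => hneg b hb (hsub hbT)) hpos

theorem consS1 {y z : A} (hyz : y ≠ z) : consistent (S1 y z) := by
  rintro ⟨a, h1, h2⟩
  simp [S1, Prod.ext_iff] at h1 h2
  subst h1; exact hyz h2

theorem consS2 {x y z : A} (hyz : y ≠ z) (hxz : x ≠ z) : consistent (S2 x y z) := by
  rintro ⟨a, h1, h2⟩
  simp [S2, Prod.ext_iff] at h1 h2
  subst h2
  rcases h1 with h | h
  · exact hxz h.symm
  · exact hyz h.symm

theorem ax_not_S1 {x y z : A} (hxy : x ≠ y) : (true, x) ∉ S1 y z := by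
  simp [S1, Prod.ext_iff, hxy]

theorem cz_not_S2 {x y z : A} (hyz : y ≠ z) (hxz : x ≠ z) : (true, z) ∉ S2 x y z := by
  simp [S2, Prod.ext_iff, hxz.symm, hyz.symm]

theorem ax_not_single {x z : A} : (true, x) ∉ ({((false : Bool), z)} : Set (Bool × A)) := by
  simp [Prod.ext_iff]


theorem case11 {x z : A} {S : Set (Bool × A)}
    (hAS : answerSet [(⟨[(true,x)],[],[]⟩ : Rule (Bool × A)),
      ⟨[(true,z)],[(true,x)],[]⟩, ⟨[(false,z)],[],[]⟩] S)
    (hcons : consistent S) : False := by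
  have hr := hAS.2.1
  simp [reductClosed] at hr
  exact hcons ⟨z, hr.2.1 hr.1, hr.2.2⟩

theorem case12 {x y z : A} {S : Set (Bool × A)} (hxy : x ≠ y) (hyz : y ≠ z) (hxz : x ≠ z)
    (hAS : answerSet [(⟨[(true,x)],[],[]⟩ : Rule (Bool × A)),
      ⟨[(true,y)],[(true,x)],[(true,z)]⟩, ⟨[(false,z)],[],[]⟩] S)
    (hcons : consistent S) : S = S2 x y z := by
  have hr := hAS.2.1
  simp [reductClosed] at hr
  have hcbar : (false, z) ∈ S := hr.2.2
  have hzS : (true, z) ∉ S := fun h => hcons ⟨z, h, hcbar⟩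
  have hb : (true, y) ∈ S := hr.2.1 hzS hr.1
  refine (hAS.2.2 (S2 x y z) ?_ (Or.inl (consS2 hyz hxz)) ?_).symm
  · intro p hp
    rcases hp with rfl | rfl | rfl
    · exact hr.1
    · exact hb
    · exact hcbar
  · intro r hrm hneg hpos
    simp only [List.mem_cons, List.not_mem_nil, or_false] at hrm
    rcases hrm with rfl | rfl | rfl
    · exact ⟨(true,x), by simp, by simp [S2]⟩
    · exact ⟨(true,y), by simp, by simp [S2]⟩
    · exact ⟨(false,z), by simp, by simp [S2]⟩

theorem case2 {x y z : A} {S : Set (Bool × A)} (hxy : x ≠ y) (hyz : y ≠ z)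
    (hd ng : List (Bool × A))
    (hAS : answerSet [(⟨[(true,y)],[],[(true,x)]⟩ : Rule (Bool × A)),
      ⟨hd,[(true,x)],ng⟩, ⟨[(false,z)],[],[]⟩] S)
    (hcons : consistent S) : S = S1 y z := by
  have hr := hAS.2.1
  have hcbar : (false, z) ∈ S := by
    obtain ⟨c, hc, hcS⟩ := hr ⟨[(false,z)],[],[]⟩ (by simp) (by simp) (by simp)
    simp at hc; subst hc; exact hcS
  have haS : (true, x) ∉ S := by
    intro ha
    have hTeq := hAS.2.2 {((false : Bool), z)} ?_ ?_ ?_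
    · rw [← hTeq] at ha
      simp [Prod.ext_iff] at ha
    · intro p hp; simp at hp; subst hp; exact hcbar
    · refine Or.inl ?_
      rintro ⟨a, h1, h2⟩
      simp [Prod.ext_iff] at h1
    · intro r hrm hneg hpos
      simp only [List.mem_cons, List.not_mem_nil, or_false] at hrm
      rcases hrm with rfl | rfl | rfl
      · exact absurd ha (hneg (true,x) (by simp))
      · have := hpos (true,x) (by simp)
        simp [Prod.ext_iff] at this
      · exact ⟨(false,z), by simp, by simp⟩
  have hb : (true, y) ∈ S := by
    obtain ⟨c, hc, hcS⟩ := hr ⟨[(true,y)],[],[(true,x)]⟩ (by simp)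
      (by intro b hb; simp at hb; subst hb; exact haS) (by simp)
    simp at hc; subst hc; exact hcS
  refine (hAS.2.2 (S1 y z) ?_ (Or.inl (consS1 hyz)) ?_).symm
  · intro p hp
    rcases hp with rfl | rfl
    · exact hb
    · exact hcbar
  · intro r hrm hneg hpos
    simp only [List.mem_cons, List.not_mem_nil, or_false] at hrm
    rcases hrm with rfl | rfl | rfl
    · exact ⟨(true,y), by simp, by simp [S1]⟩
    · exact absurd (hpos (true,x) (by simp)) (ax_not_S1 hxy)
    · exact ⟨(false,z), by simp, by simp [S1]⟩

def Q1 (x y z : A) : List (Rule (Bool × A)) :=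
  [⟨[(true,y)],[],[(true,x)]⟩, ⟨[(true,z)],[(true,x)],[]⟩, ⟨[(false,z)],[],[]⟩]

def Q2 (x y z : A) : List (Rule (Bool × A)) :=
  [⟨[(true,x)],[],[]⟩, ⟨[(true,y)],[(true,x)],[(true,z)]⟩, ⟨[(false,z)],[],[]⟩]

theorem split1 (x y z : A) : isSplit (Pex x y z) (Q1 x y z) := by
  refine ⟨rfl, ?_⟩
  intro i r h
  rcases i with _ | _ | _ | i
  · simp [Pex] at h; subst h
    exact ⟨2, by norm_num, by simp [R1], rfl⟩
  · simp [Pex] at h; subst h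
    exact ⟨1, le_refl 1, by simp [R2], rfl⟩
  · simp [Pex] at h; subst h
    exact ⟨1, le_refl 1, by simp [R3], rfl⟩
  · simp [Pex] at h

theorem split2 (x y z : A) : isSplit (Pex x y z) (Q2 x y z) := by
  refine ⟨rfl, ?_⟩
  intro i r h
  rcases i with _ | _ | _ | i
  · simp [Pex] at h; subst h
    exact ⟨1, le_refl 1, by simp [R1], rfl⟩
  · simp [Pex] at h; subst h
    exact ⟨2, by norm_num, by simp [R2], rfl⟩
  · simp [Pex] at h; subst h
    exact ⟨1, le_refl 1, by simp [R3], rfl⟩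
  · simp [Pex] at h

theorem asQ1 {x y z : A} (hxy : x ≠ y) (hyz : y ≠ z) :
    answerSet (Q1 x y z) (S1 y z) := by
  refine ⟨Or.inl (consS1 hyz), ?_, ?_⟩
  · intro r hrm hneg hpos
    simp only [Q1, List.mem_cons, List.not_mem_nil, or_false] at hrm
    rcases hrm with rfl | rfl | rfl
    · exact ⟨(true,y), by simp, by simp [S1]⟩
    · exact absurd (hpos (true,x) (by simp)) (ax_not_S1 hxy)
    · exact ⟨(false,z), by simp, by simp [S1]⟩
  · intro T hsub _ hrc
    refine Set.Subset.antisymm hsub ?_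
    intro p hp
    rcases hp with rfl | rfl
    · obtain ⟨c, hc, hcT⟩ := hrc ⟨[(true,y)],[],[(true,x)]⟩ (by simp [Q1])
        (by intro b hb; simp at hb; subst hb; exact ax_not_S1 hxy) (by simp)
      simp at hc; subst hc; exact hcT
    · obtain ⟨c, hc, hcT⟩ := hrc ⟨[(false,z)],[],[]⟩ (by simp [Q1]) (by simp) (by simp)
      simp at hc; subst hc; exact hcT

theorem asQ2 {x y z : A} (hyz : y ≠ z) (hxz : x ≠ z) :
    answerSet (Q2 x y z) (S2 x y z) := by
  refine ⟨Or.inl (consS2 hyz hxz), ?_, ?_⟩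
  · intro r hrm hneg hpos
    simp only [Q2, List.mem_cons, List.not_mem_nil, or_false] at hrm
    rcases hrm with rfl | rfl | rfl
    · exact ⟨(true,x), by simp, by simp [S2]⟩
    · exact ⟨(true,y), by simp, by simp [S2]⟩
    · exact ⟨(false,z), by simp, by simp [S2]⟩
  · intro T hsub _ hrc
    refine Set.Subset.antisymm hsub ?_
    have hx : (true, x) ∈ T := by
      obtain ⟨c, hc, hcT⟩ := hrc ⟨[(true,x)],[],[]⟩ (by simp [Q2]) (by simp) (by simp)
      simp at hc; subst hc; exact hcT
    intro p hp
    rcases hp with rfl | rfl | rfl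
    · exact hx
    · obtain ⟨c, hc, hcT⟩ := hrc ⟨[(true,y)],[(true,x)],[(true,z)]⟩ (by simp [Q2])
        (by intro b hb; simp at hb; subst hb; exact cz_not_S2 hyz hxz)
        (by intro a ha; simp at ha; subst ha; exact hx)
      simp at hc; subst hc; exact hcT
    · obtain ⟨c, hc, hcT⟩ := hrc ⟨[(false,z)],[],[]⟩ (by simp [Q2]) (by simp) (by simp)
      simp at hc; subst hc; exact hcT

theorem lpodAS_iff {x y z : A} (hxy : x ≠ y) (hyz : y ≠ z) (hxz : x ≠ z)
    (S : Set (Bool × A)) :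
    lpodAS (Pex x y z) S ↔ S = S1 y z ∨ S = S2 x y z := by
  constructor
  · rintro ⟨P', ⟨hlen, hopt⟩, hAS, hcons⟩
    obtain ⟨k0, hk01, hk02, h0⟩ := hopt 0 (R1 x y) rfl
    obtain ⟨k1, hk11, hk12, h1⟩ := hopt 1 (R2 x y z) rfl
    obtain ⟨k2, hk21, hk22, h2⟩ := hopt 2 (R3 z) rfl
    simp [R1] at hk02
    simp [R2] at hk12
    simp [R3] at hk22
    simp [Pex] at hlen
    have hP' : P' = [ruleOption (R1 x y) k0, ruleOption (R2 x y z) k1,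
        ruleOption (R3 z) k2] := by
      apply List.ext_getElem?
      intro n
      rcases n with _ | _ | _ | n
      · exact h0
      · exact h1
      · exact h2
      · rw [List.getElem?_eq_none_iff.2 (by omega), List.getElem?_eq_none_iff.2 (by simp)]
    subst hP'
    have hk2 : k2 = 1 := by omega
    subst hk2
    have hc0 : k0 = 1 ∨ k0 = 2 := by omega
    have hc1 : k1 = 1 ∨ k1 = 2 := by omega
    rcases hc0 with rfl | rfl <;> rcases hc1 with rfl | rfl
    · exact absurd hcons (fun h => case11 hAS h)
    · exact Or.inr (case12 hxy hyz hxz hAS hcons)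
    · exact Or.inl (case2 hxy hyz _ _ hAS hcons)
    · exact Or.inl (case2 hxy hyz _ _ hAS hcons)
  · rintro (rfl | rfl)
    · exact ⟨Q1 x y z, split1 x y z, asQ1 hxy hyz, consS1 hyz⟩
    · exact ⟨Q2 x y z, split2 x y z, asQ2 hyz hxz, consS2 hyz hxz⟩

theorem sat_R1_S2 (x y z : A) : satDeg (S2 x y z) (R1 x y) 1 :=
  Or.inr ⟨⟨by simp [R1], by simp [R1]⟩, le_refl 1, ⟨(true,x), rfl, by simp [S2]⟩,
    fun i hi => absurd hi (by omega)⟩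

theorem notsat_R1_S1 {x y z : A} (hxy : x ≠ y) : ¬ satDeg (S1 y z) (R1 x y) 1 := by
  rintro (⟨hb, _⟩ | ⟨_, _, ⟨c, hc, hcS⟩, _⟩)
  · exact hb ⟨by simp [R1], by simp [R1]⟩
  · simp [R1] at hc; subst hc; exact ax_not_S1 hxy hcS

theorem sat_R2_S1 {x y z : A} (hxy : x ≠ y) : satDeg (S1 y z) (R2 x y z) 1 :=
  Or.inl ⟨fun hb => ax_not_S1 hxy (hb.1 (true,x) (by simp [R2])), rfl⟩

theorem notsat_R2_S2 {x y z : A} (hyz : y ≠ z) (hxz : x ≠ z) :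
    ¬ satDeg (S2 x y z) (R2 x y z) 1 := by
  rintro (⟨hb, _⟩ | ⟨_, _, ⟨c, hc, hcS⟩, _⟩)
  · refine hb ⟨?_, by simp [R2]⟩
    intro a ha; simp [R2] at ha; subst ha; simp [S2]
  · simp [R2] at hc; subst hc; exact cz_not_S2 hyz hxz hcS

theorem not_pref_self {L : Type} (P : List (Rule L)) (S : Set L) : ¬ pref P S S := by
  rintro ⟨i, _, hsub, _⟩
  exact hsub.2 hsub.1

theorem not_pref_21 {x y z : A} (hxy : x ≠ y) (hyz : y ≠ z) (hxz : x ≠ z) :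
    ¬ pref (Pex x y z) (S2 x y z) (S1 y z) := by
  rintro ⟨i, hi, hsub, hprev⟩
  rcases eq_or_lt_of_le hi with h | h
  · subst h
    have h2 : R2 x y z ∈ degSet (S1 y z) (Pex x y z) 1 :=
      ⟨by simp [Pex], sat_R2_S1 hxy⟩
    exact notsat_R2_S2 hyz hxz (hsub.1 h2).2
  · have heq := hprev 1 h
    have h1 : R1 x y ∈ degSet (S2 x y z) (Pex x y z) 1 :=
      ⟨by simp [Pex], sat_R1_S2 x y z⟩
    rw [heq] at h1
    exact notsat_R1_S1 hxy h1.2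

theorem not_pref_12 {x y z : A} (hxy : x ≠ y) (hyz : y ≠ z) (hxz : x ≠ z) :
    ¬ pref (Pex x y z) (S1 y z) (S2 x y z) := by
  rintro ⟨i, hi, hsub, hprev⟩
  rcases eq_or_lt_of_le hi with h | h
  · subst h
    have h1 : R1 x y ∈ degSet (S2 x y z) (Pex x y z) 1 :=
      ⟨by simp [Pex], sat_R1_S2 x y z⟩
    exact notsat_R1_S1 hxy (hsub.1 h1).2
  · have heq := hprev 1 h
    have h1 : R1 x y ∈ degSet (S2 x y z) (Pex x y z) 1 :=
      ⟨by simp [Pex], sat_R1_S2 x y z⟩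
    rw [← heq] at h1
    exact notsat_R1_S1 hxy h1.2

theorem pref1 {x y z : A} (hxy : x ≠ y) (hyz : y ≠ z) (hxz : x ≠ z) :
    preferredAS (Pex x y z) (S1 y z) := by
  refine ⟨(lpodAS_iff hxy hyz hxz _).mpr (Or.inl rfl), ?_⟩
  rintro ⟨S', hS', hp⟩
  rcases (lpodAS_iff hxy hyz hxz S').mp hS' with rfl | rfl
  · exact not_pref_self _ _ hp
  · exact not_pref_21 hxy hyz hxz hp

theorem pref2 {x y z : A} (hxy : x ≠ y) (hyz : y ≠ z) (hxz : x ≠ z) :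
    preferredAS (Pex x y z) (S2 x y z) := by
  refine ⟨(lpodAS_iff hxy hyz hxz _).mpr (Or.inr rfl), ?_⟩
  rintro ⟨S', hS', hp⟩
  rcases (lpodAS_iff hxy hyz hxz S').mp hS' with rfl | rfl
  · exact not_pref_12 hxy hyz hxz hp
  · exact not_pref_self _ _ hp

end NTaux

/-- there is no translation from LPODs to extended logic programs
over the same literal vocabulary (no new atoms) such that for every LPOD the
preferred answer sets coincide exactly with the answer sets of the translation. -/
theorem no_translation (A : Type) (x y z : A)
    (hxy : x ≠ y) (hyz : y ≠ z) (hxz : x ≠ z) :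
    ¬ ∃ trans : List (Rule (Bool × A)) → List (Rule (Bool × A)),
      (∀ P r, r ∈ trans P → r.head.length = 1) ∧
      (∀ P (S : Set (Bool × A)), preferredAS P S ↔ answerSet (trans P) S) := by
  rintro ⟨trans, _, hiff⟩
  have h1 := (hiff (NTaux.Pex x y z) (NTaux.S1 y z)).mp (NTaux.pref1 hxy hyz hxz)
  have h2 := (hiff (NTaux.Pex x y z) (NTaux.S2 x y z)).mp (NTaux.pref2 hxy hyz hxz)
  have hsub : NTaux.S1 y z ⊆ NTaux.S2 x y z := by
    intro p hp
    rcases hp with rfl | rfl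
    · exact Or.inr (Or.inl rfl)
    · exact Or.inr (Or.inr rfl)
  have heq := NTaux.as_min h1 h2 hsub
  have hx : (true, x) ∈ NTaux.S2 x y z := Or.inl rfl
  rw [← heq] at hx
  exact NTaux.ax_not_S1 hxy hx
end
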